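/- arXiv:1404.7192 — 2 statements merged into one kernel-verified Lean document; each statement's English description precedes it below -/
import Mathlib

section
/- Let ϖ₁, ϖ₂ ∈ F satisfy 0 < |ϖ₁| ≤ |ϖ₂| < 1, let I = [|ϖ₁|, |ϖ₂|] ⊆ (0,1), and let B^{b,∘}_I = {x ∈ B^b : |x|_I ≤ 1}. Then the topology induced on B^{b,∘}_I by the norm |·|_I coincides with the p-adic topology: (i) for every natural number k there exists ε > 0 such that every x ∈ B^{b,∘}_I with |x|_I ≤ ε lies in p^k · B^{b,∘}_I, and (ii) for every ε > 0 there exists a natural number k such that every element of p^k · B^{b,∘}_I has |·|_I-norm at most ε. -/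
open scoped NNReal

/-- The `n`-th coefficient of the Teichmüller expansion `x = Σ [xₙ] pⁿ` of a `p`-typical
Witt vector over a perfect field of characteristic `p`. -/
noncomputable def teichCoeff (p : ℕ) [Fact p.Prime] (F : Type*) [Field F] [CharP F p]
    [PerfectRing F p] (x : WittVector p F) (n : ℕ) : F :=
  (⇑(frobeniusEquiv F p).symm)^[n] (x.coeff n)

/-- The set of elements of `B^b ⊆ W(F)[1/p]` (realized inside the fraction field of `W(F)`)
whose `I`-Gauss norm is at most `ε`, where `I = [|ϖ₁|, |ϖ₂|]`.  An element of `B^b` is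
`y = x/p^k` with `x ∈ W(F)` having bounded Teichmüller coefficients `xₙ`, and `|y|_I ≤ ε`
means `|xₙ| ρ^n ≤ ε ρ^k` for all `ρ ∈ I` and all `n`. -/
def gaussBallI (p : ℕ) [Fact p.Prime] (F : Type*) [Field F] [CharP F p] [PerfectRing F p]
    (v : Valuation F ℝ≥0) (ϖ₁ ϖ₂ : F) (ε : ℝ≥0) : Set (FractionRing (WittVector p F)) :=
  {y | ∃ (k : ℕ) (x : WittVector p F),
      y = algebraMap (WittVector p F) (FractionRing (WittVector p F)) x /
            (p : FractionRing (WittVector p F)) ^ k ∧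
      (∃ C : ℝ≥0, ∀ n : ℕ, v (teichCoeff p F x n) ≤ C) ∧
      (∀ ρ ∈ Set.Icc (v ϖ₁) (v ϖ₂), ∀ n : ℕ, v (teichCoeff p F x n) * ρ ^ n ≤ ε * ρ ^ k)}

section Aux

variable {p : ℕ} [Fact p.Prime] {F : Type*} [Field F] [CharP F p] [PerfectRing F p]

lemma tc_mul_p (x : WittVector p F) (n : ℕ) :
    teichCoeff p F (x * p) (n + 1) = teichCoeff p F x n := by
  unfold teichCoeff
  rw [← WittVector.verschiebung_frobenius, WittVector.verschiebung_coeff_succ,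
    WittVector.coeff_frobenius_charP, Function.iterate_succ_apply]
  congr 1
  exact (frobeniusEquiv F p).symm_apply_apply _

lemma tc_mul_p_zero (x : WittVector p F) :
    teichCoeff p F (x * p) 0 = 0 := by
  unfold teichCoeff
  rw [← WittVector.verschiebung_frobenius, WittVector.verschiebung_coeff_zero,
    Function.iterate_zero_apply]

lemma tc_mul_ppow (x : WittVector p F) (k n : ℕ) :
    teichCoeff p F (x * p ^ k) (n + k) = teichCoeff p F x n := by
  induction k with
  | zero => simp
  | succ k ih =>
    rw [pow_succ, ← mul_assoc, ← Nat.add_assoc, tc_mul_p, ih]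

lemma tc_mul_ppow_zero (x : WittVector p F) {k n : ℕ} (h : n < k) :
    teichCoeff p F (x * p ^ k) n = 0 := by
  induction k generalizing n with
  | zero => omega
  | succ k ih =>
    rw [pow_succ, ← mul_assoc]
    cases n with
    | zero => exact tc_mul_p_zero _
    | succ m => rw [tc_mul_p]; exact ih (by omega)

end Aux

/-- On `B^{b,∘}_I = {x ∈ B^b : |x|_I ≤ 1}`, the topology induced by the
norm `|·|_I` coincides with the `p`-adic topology:
(i) for every `k` there is `ε > 0` such that every `x ∈ B^{b,∘}_I` with `|x|_I ≤ ε`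
lies in `p^k · B^{b,∘}_I`, and
(ii) for every `ε > 0` there is `k` such that every element of `p^k · B^{b,∘}_I`
has `|·|_I`-norm at most `ε`. -/
theorem gaussNormI_topology_eq_padic {p : ℕ} [Fact p.Prime] {F : Type*} [Field F] [CharP F p]
    [PerfectRing F p] (v : Valuation F ℝ≥0)
    (hv : ∃ y : F, v y ≠ 0 ∧ v y ≠ 1)
    (ϖ₁ ϖ₂ : F) (hϖ₁ : 0 < v ϖ₁) (hϖ₁₂ : v ϖ₁ ≤ v ϖ₂) (hϖ₂ : v ϖ₂ < 1) :
    (∀ k : ℕ, ∃ ε : ℝ≥0, 0 < ε ∧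
      ∀ y ∈ gaussBallI p F v ϖ₁ ϖ₂ 1, y ∈ gaussBallI p F v ϖ₁ ϖ₂ ε →
        ∃ z ∈ gaussBallI p F v ϖ₁ ϖ₂ 1,
          y = (p : FractionRing (WittVector p F)) ^ k * z) ∧
    (∀ ε : ℝ≥0, 0 < ε → ∃ k : ℕ,
      ∀ z ∈ gaussBallI p F v ϖ₁ ϖ₂ 1,
        (p : FractionRing (WittVector p F)) ^ k * z ∈ gaussBallI p F v ϖ₁ ϖ₂ ε) := by
  have hpW : (p : WittVector p F) ≠ 0 := by
    intro h
    have h1 := WittVector.coeff_p p F 1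
    rw [h] at h1
    simp at h1
  have hpK : (p : FractionRing (WittVector p F)) ≠ 0 := by
    rw [← map_natCast (algebraMap (WittVector p F) (FractionRing (WittVector p F)))]
    exact fun h => hpW (IsFractionRing.to_map_eq_zero_iff.mp h)
  constructor
  · -- (i)
    intro k
    refine ⟨(v ϖ₁) ^ k, pow_pos hϖ₁ k, ?_⟩
    rintro y - ⟨j, x, hyx, hC, hb⟩
    refine ⟨algebraMap (WittVector p F) (FractionRing (WittVector p F)) x /
      (p : FractionRing (WittVector p F)) ^ (k + j), ⟨k + j, x, rfl, hC, ?_⟩, ?_⟩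
    · intro ρ hρ n
      calc v (teichCoeff p F x n) * ρ ^ n ≤ (v ϖ₁) ^ k * ρ ^ j := hb ρ hρ n
        _ ≤ ρ ^ k * ρ ^ j := by
            gcongr
            exact hρ.1
        _ = 1 * ρ ^ (k + j) := by rw [one_mul, pow_add]
    · rw [hyx, pow_add]
      field_simp
  · -- (ii)
    intro ε hε
    obtain ⟨k, hk⟩ := NNReal.exists_pow_lt_of_lt_one hε hϖ₂
    refine ⟨k, ?_⟩
    rintro z ⟨j, x, hzx, ⟨C, hC⟩, hb⟩
    refine ⟨j, x * (p : WittVector p F) ^ k, ?_, ⟨C, ?_⟩, ?_⟩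
    · rw [hzx, map_mul, map_pow, map_natCast]
      ring
    · intro n
      rcases lt_or_ge n k with h | h
      · rw [tc_mul_ppow_zero x h, map_zero]
        exact zero_le
      · obtain ⟨m, rfl⟩ : ∃ m, n = m + k := ⟨n - k, by omega⟩
        rw [tc_mul_ppow]
        exact hC m
    · intro ρ hρ n
      rcases lt_or_ge n k with h | h
      · rw [tc_mul_ppow_zero x h, map_zero, zero_mul]
        exact zero_le
      · obtain ⟨m, rfl⟩ : ∃ m, n = m + k := ⟨n - k, by omega⟩
        rw [tc_mul_ppow, pow_add, ← mul_assoc]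
        have h1 : v (teichCoeff p F x m) * ρ ^ m ≤ ρ ^ j := by simpa using hb ρ hρ m
        calc v (teichCoeff p F x m) * ρ ^ m * ρ ^ k
            ≤ ρ ^ j * (v ϖ₂) ^ k :=
              mul_le_mul' h1 (pow_le_pow_left' hρ.2 k)
          _ ≤ ρ ^ j * ε := mul_le_mul' le_rfl hk.le
          _ = ε * ρ ^ j := mul_comm _ _
end

section
/- Fix any ϖ ∈ F with 0 < |ϖ| < 1. Then B^b equals the subring of W(F)[1/p] generated by the image of W(O_F) (under the map of Witt vectors induced by the inclusion O_F ⊆ F) together with the two elements p^{-1} and [ϖ]^{-1} = [ϖ^{-1}]; in other words, B^b = W(O_F)[1/p, 1/[ϖ]], and in particular this subring is independent of the choice of ϖ. -/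
open scoped NNReal

section KeyLemma

open WittVector MvPolynomial Function

variable {p : ℕ} [hp : Fact p.Prime]

/-- Coefficient-wise Teichmüller scaling of a Witt vector. -/
private def scaleT {R : Type*} [CommRing R] (a : R) (x : WittVector p R) : WittVector p R :=
  WittVector.mk p fun n => a ^ p ^ n * x.coeff n

omit hp in
private lemma scaleT_coeff {R : Type*} [CommRing R] (a : R) (x : WittVector p R) (n : ℕ) :
    (scaleT a x).coeff n = a ^ p ^ n * x.coeff n := rfl

private lemma ghostComponent_scaleT {R : Type*} [CommRing R] (a : R) (x : WittVector p R)
    (n : ℕ) : ghostComponent n (scaleT a x) = a ^ p ^ n * ghostComponent n x := by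
  rw [ghostComponent_apply, ghostComponent_apply, aeval_wittPolynomial, aeval_wittPolynomial,
    Finset.mul_sum]
  refine Finset.sum_congr rfl fun i hi => ?_
  rw [Finset.mem_range, Nat.lt_succ_iff] at hi
  rw [scaleT_coeff, mul_pow, ← pow_mul]
  have : i + (n - i) = n := by omega
  rw [← pow_add, this]
  ring

private lemma scaleT_map {R S : Type*} [CommRing R] [CommRing S] (f : R →+* S) (a : R)
    (x : WittVector p R) : WittVector.map f (scaleT a x) = scaleT (f a) (WittVector.map f x) := by
  ext n
  simp [scaleT_coeff, WittVector.map_coeff]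

private lemma teichmuller_mul_aux1 {S : Type*} (a x : WittVector p (MvPolynomial S ℚ)) :
    teichmuller p (a.coeff 0) * x = scaleT (a.coeff 0) x := by
  apply (ghostMap.bijective_of_invertible p (MvPolynomial S ℚ)).1
  rw [RingHom.map_mul]
  ext1 n
  simp only [Pi.mul_apply, ghostMap_apply, ghostComponent_teichmuller, ghostComponent_scaleT]

private lemma teichmuller_mul_aux2 {S : Type*} (a x : WittVector p (MvPolynomial S ℤ)) :
    teichmuller p (a.coeff 0) * x = scaleT (a.coeff 0) x := by
  refine WittVector.map_injective (MvPolynomial.map (Int.castRingHom ℚ))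
    (MvPolynomial.map_injective _ Int.cast_injective) ?_
  rw [RingHom.map_mul, map_teichmuller, scaleT_map, ← WittVector.map_coeff]
  exact teichmuller_mul_aux1 _ _

/-- Multiplication by a Teichmüller representative acts coefficient-wise. -/
lemma teichmuller_mul_coeff {R : Type*} [CommRing R] (a : R) (x : WittVector p R) (n : ℕ) :
    (teichmuller p a * x).coeff n = a ^ p ^ n * x.coeff n := by
  suffices h : teichmuller p a * x = scaleT a x by rw [h, scaleT_coeff]
  obtain ⟨a, rfl⟩ := counit_surjective R a
  obtain ⟨x, rfl⟩ := WittVector.map_surjective (counit R) (counit_surjective R) x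
  have h := teichmuller_mul_aux2 (p := p) (teichmuller p a) x
  rw [teichmuller_coeff_zero] at h
  rw [← map_teichmuller, ← scaleT_map, ← RingHom.map_mul, h]

end KeyLemma

section PerfectField

open WittVector

variable {p : ℕ} [hp : Fact p.Prime] {F : Type*} [Field F] [CharP F p] [PerfectRing F p]

private lemma frob_symm_iterate_pow (z : F) (n : ℕ) :
    ((⇑(frobeniusEquiv F p).symm)^[n] z) ^ p ^ n = z := by
  induction n with
  | zero => simp
  | succ n ih =>
    rw [Function.iterate_succ_apply', pow_succ', pow_mul, frobeniusEquiv_symm_pow_p, ih]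

private lemma teichCoeff_pow (x : WittVector p F) (n : ℕ) :
    teichCoeff p F x n ^ p ^ n = x.coeff n := frob_symm_iterate_pow _ _

private lemma frob_symm_iterate_mul (u w : F) (n : ℕ) :
    (⇑(frobeniusEquiv F p).symm)^[n] (u * w) =
      (⇑(frobeniusEquiv F p).symm)^[n] u * (⇑(frobeniusEquiv F p).symm)^[n] w := by
  induction n with
  | zero => simp
  | succ n ih =>
    rw [Function.iterate_succ_apply', Function.iterate_succ_apply',
      Function.iterate_succ_apply', ih, map_mul]

private lemma teichCoeff_teichmuller_mul (a : F) (x : WittVector p F) (n : ℕ) :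
    teichCoeff p F (teichmuller p a * x) n = a * teichCoeff p F x n := by
  unfold teichCoeff
  rw [teichmuller_mul_coeff, frob_symm_iterate_mul]
  congr 1
  have h1 : a ^ p ^ n = (⇑(frobeniusEquiv F p))^[n] a := by
    rw [coe_frobeniusEquiv, iterate_frobenius]
  rw [h1]
  exact Function.LeftInverse.iterate (frobeniusEquiv F p).symm_apply_apply n a

private lemma teichCoeff_le_one (v : Valuation F ℝ≥0) {x : WittVector p F} {n : ℕ}
    (h : v (x.coeff n) ≤ 1) : v (teichCoeff p F x n) ≤ 1 := by
  have hpow : v (teichCoeff p F x n) ^ p ^ n = v (x.coeff n) := by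
    rw [← map_pow, teichCoeff_pow]
  rw [← hpow] at h
  exact (pow_le_one_iff_of_nonneg zero_le (pow_ne_zero n hp.out.ne_zero)).1 h

end PerfectField

/-- For any `ϖ ∈ F` with `0 < |ϖ| < 1`, the ring `B^b` (elements `x/p^k` of the
fraction field of `W(F)` with bounded Teichmüller coefficients) equals the subring
`W(O_F)[1/p, 1/[ϖ]]` of `W(F)[1/p]` generated by the image of `W(O_F)` together with
`p⁻¹` and `[ϖ]⁻¹`; in particular this subring does not depend on the choice of `ϖ`. -/
theorem Bb_eq_closure {p : ℕ} [Fact p.Prime] {F : Type*} [Field F] [CharP F p]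
    [PerfectRing F p] (v : Valuation F ℝ≥0)
    (hv : ∃ y : F, v y ≠ 0 ∧ v y ≠ 1)
    (ϖ : F) (hϖ0 : 0 < v ϖ) (hϖ1 : v ϖ < 1) :
    {y : FractionRing (WittVector p F) |
        ∃ (k : ℕ) (x : WittVector p F),
          y = algebraMap (WittVector p F) (FractionRing (WittVector p F)) x /
                (p : FractionRing (WittVector p F)) ^ k ∧
          (∃ C : ℝ≥0, ∀ n : ℕ, v (teichCoeff p F x n) ≤ C)} =
      (Subring.closure
        (Set.range ((algebraMap (WittVector p F) (FractionRing (WittVector p F))).comp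
            (WittVector.map v.integer.subtype)) ∪
          {(p : FractionRing (WittVector p F))⁻¹,
            (algebraMap (WittVector p F) (FractionRing (WittVector p F))
              (WittVector.teichmuller p ϖ))⁻¹}) : Set (FractionRing (WittVector p F))) := by
  classical
  set K := FractionRing (WittVector p F)
  set ι := algebraMap (WittVector p F) K with hιdef
  set σ := v.integer.subtype with hσdef
  have hϖne : ϖ ≠ 0 := by
    intro h
    rw [h, map_zero] at hϖ0
    exact lt_irrefl 0 hϖ0
  have hpne : (p : K) ≠ 0 := WittVector.FractionRing.p_nonzero p F
  have hT : ι (WittVector.teichmuller p ϖ) * ι (WittVector.teichmuller p ϖ⁻¹) = 1 := by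
    rw [← map_mul, ← MonoidHom.map_mul, mul_inv_cancel₀ hϖne, MonoidHom.map_one, map_one]
  have hTinv : (ι (WittVector.teichmuller p ϖ))⁻¹ = ι (WittVector.teichmuller p ϖ⁻¹) :=
    inv_eq_of_mul_eq_one_right hT
  have hϖmem : ϖ ∈ v.integer := (v.mem_integer_iff ϖ).2 hϖ1.le
  set ϖo : v.integer := ⟨ϖ, hϖmem⟩ with hϖodef
  ext y
  simp only [Set.mem_setOf_eq, SetLike.mem_coe]
  constructor
  · rintro ⟨k, x, rfl, C, hC⟩
    obtain ⟨m, hm⟩ : ∃ m : ℕ, C * v ϖ ^ m ≤ 1 := by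
      obtain ⟨m, hm⟩ := exists_pow_lt_of_lt_one (x := (C + 1)⁻¹)
        (by positivity) hϖ1
      refine ⟨m, le_trans (mul_le_mul_of_nonneg_left hm.le zero_le) ?_⟩
      rw [← div_eq_mul_inv]
      exact div_le_one_of_le₀ (le_add_right le_rfl) zero_le
    set y' := WittVector.teichmuller p (ϖ ^ m) * x with hy'def
    have hy'c : ∀ n, v (y'.coeff n) ≤ 1 := by
      intro n
      have h2 : v (teichCoeff p F y' n) ≤ 1 := by
        rw [hy'def, teichCoeff_teichmuller_mul, map_mul, map_pow]
        calc v ϖ ^ m * v (teichCoeff p F x n) ≤ v ϖ ^ m * C :=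
              mul_le_mul_of_nonneg_left (hC n) zero_le
          _ = C * v ϖ ^ m := mul_comm _ _
          _ ≤ 1 := hm
      have h3 : v (y'.coeff n) = v (teichCoeff p F y' n) ^ p ^ n := by
        rw [← map_pow, teichCoeff_pow]
      rw [h3]
      exact pow_le_one' h2 _
    set w : WittVector p v.integer := WittVector.mk p (fun n => ⟨y'.coeff n, hy'c n⟩) with hwdef
    have hw : WittVector.map σ w = y' := by
      ext n
      simp [WittVector.map_coeff, hwdef, hσdef, WittVector.coeff_mk]
    have hxx : (WittVector.teichmuller p ϖ⁻¹ : WittVector p F) ^ m * y' = x := by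
      rw [hy'def, ← mul_assoc, ← MonoidHom.map_pow, ← MonoidHom.map_mul, inv_pow,
        inv_mul_cancel₀ (pow_ne_zero m hϖne), MonoidHom.map_one, one_mul]
    have hx : ι x / (p : K) ^ k =
        (ι (WittVector.teichmuller p ϖ))⁻¹ ^ m *
          (ι (WittVector.map σ w) * ((p : K)⁻¹) ^ k) := by
      rw [div_eq_mul_inv, ← inv_pow, hTinv, ← map_pow, hw, ← mul_assoc, ← map_mul, hxx]
    rw [hx]
    refine mul_mem (pow_mem (Subring.subset_closure ?_) m)
      (mul_mem (Subring.subset_closure ?_) (pow_mem (Subring.subset_closure ?_) k))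
    · exact Or.inr (Or.inr rfl)
    · exact Or.inl ⟨w, rfl⟩
    · exact Or.inr (Or.inl rfl)
  · intro hy
    have hgen : ∀ (k m j l : ℕ) (w : WittVector p v.integer),
        ι (WittVector.teichmuller p ϖ⁻¹ ^ (m + l) *
            WittVector.map σ ((p : WittVector p v.integer) ^ j *
              WittVector.teichmuller p ϖo ^ l * w)) * ((p : K)⁻¹) ^ (k + j) =
          ι (WittVector.teichmuller p ϖ⁻¹ ^ m * WittVector.map σ w) * ((p : K)⁻¹) ^ k := by
      intro k m j l w
      have hmapϖ : WittVector.map σ (WittVector.teichmuller p ϖo) =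
          WittVector.teichmuller p ϖ := by
        rw [WittVector.map_teichmuller]
        rfl
      have hab : ι (WittVector.teichmuller p ϖ⁻¹) ^ l *
          ι (WittVector.teichmuller p ϖ) ^ l = 1 := by
        rw [← mul_pow, mul_comm, hT, one_pow]
      have hpq : (p : K) ^ j * ((p : K)⁻¹) ^ j = 1 := by
        rw [← mul_pow, mul_inv_cancel₀ hpne, one_pow]
      calc ι (WittVector.teichmuller p ϖ⁻¹ ^ (m + l) *
            WittVector.map σ ((p : WittVector p v.integer) ^ j *
              WittVector.teichmuller p ϖo ^ l * w)) * ((p : K)⁻¹) ^ (k + j)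
          = (ι (WittVector.teichmuller p ϖ⁻¹) ^ m * ι (WittVector.map σ w) * ((p : K)⁻¹) ^ k) *
            ((ι (WittVector.teichmuller p ϖ⁻¹) ^ l * ι (WittVector.teichmuller p ϖ) ^ l) *
              ((p : K) ^ j * ((p : K)⁻¹) ^ j)) := by
            simp only [map_mul, map_pow, map_natCast, hmapϖ, pow_add]
            ring
        _ = ι (WittVector.teichmuller p ϖ⁻¹ ^ m * WittVector.map σ w) * ((p : K)⁻¹) ^ k := by
            rw [hab, hpq, mul_one, mul_one, map_mul, map_pow]
    have hD : ∃ (k m : ℕ) (w : WittVector p v.integer),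
        y = ι (WittVector.teichmuller p ϖ⁻¹ ^ m * WittVector.map σ w) * ((p : K)⁻¹) ^ k := by
      refine Subring.closure_induction ?_ ?_ ?_ ?_ ?_ ?_ hy
      · rintro x (⟨w, rfl⟩ | hx)
        · exact ⟨0, 0, w, by simp [RingHom.comp_apply]⟩
        · rcases hx with rfl | rfl
          · exact ⟨1, 0, 1, by simp⟩
          · exact ⟨0, 1, 1, by simp [hTinv]⟩
      · exact ⟨0, 0, 0, by simp⟩
      · exact ⟨0, 0, 1, by simp⟩
      · rintro x₁ x₂ hx₁ hx₂ ⟨k₁, m₁, w₁, rfl⟩ ⟨k₂, m₂, w₂, rfl⟩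
        refine ⟨k₁ + k₂, m₁ + m₂,
          (p : WittVector p v.integer) ^ k₂ * WittVector.teichmuller p ϖo ^ m₂ * w₁ +
            (p : WittVector p v.integer) ^ k₁ * WittVector.teichmuller p ϖo ^ m₁ * w₂, ?_⟩
        simp only [map_add, mul_add, add_mul]
        rw [hgen k₁ m₁ k₂ m₂ w₁]
        have h2 := hgen k₂ m₂ k₁ m₁ w₂
        rw [add_comm m₂ m₁, add_comm k₂ k₁] at h2
        rw [h2]
      · rintro x hx ⟨k, m, w, rfl⟩
        exact ⟨k, m, -w, by simp only [map_neg, mul_neg, neg_mul]; ring⟩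
      · rintro x₁ x₂ hx₁ hx₂ ⟨k₁, m₁, w₁, rfl⟩ ⟨k₂, m₂, w₂, rfl⟩
        refine ⟨k₁ + k₂, m₁ + m₂, w₁ * w₂, ?_⟩
        simp only [pow_add, map_mul, map_pow]
        ring
    obtain ⟨k, m, w, rfl⟩ := hD
    refine ⟨k, WittVector.teichmuller p ϖ⁻¹ ^ m * WittVector.map σ w,
      by rw [div_eq_mul_inv, ← inv_pow], (v ϖ)⁻¹ ^ m, fun n => ?_⟩
    have hcw : v ((WittVector.map σ w).coeff n) ≤ 1 := by
      rw [WittVector.map_coeff]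
      exact (w.coeff n).2
    have h1 : (WittVector.teichmuller p ϖ⁻¹ : WittVector p F) ^ m =
        WittVector.teichmuller p (ϖ⁻¹ ^ m) := by rw [MonoidHom.map_pow]
    rw [h1, teichCoeff_teichmuller_mul, map_mul, map_pow, map_inv₀]
    calc (v ϖ)⁻¹ ^ m * v (teichCoeff p F (WittVector.map σ w) n) ≤ (v ϖ)⁻¹ ^ m * 1 :=
          mul_le_mul_of_nonneg_left (teichCoeff_le_one v hcw) zero_le
      _ = (v ϖ)⁻¹ ^ m := mul_one _
end
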